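/- arXiv:2406.06415 — 2 statements merged into one kernel-verified Lean document; each statement's English description precedes it below -/
import Mathlib

section
/- Detectability lemma: Let H = Σ_{i=1}^N H_i be a frustration-free Hamiltonian on a finite-dimensional Hilbert space where each H_i is an orthogonal projector; let P_i = 1 - H_i, P = P_1 ⋯ P_N, G the projector onto ker H, ε = gap(H) the smallest nonzero eigenvalue of H, and g the maximum over i of the number of indices j with [H_i, H_j] ≠ 0. Then the operator norm satisfies ‖P - G‖ ≤ sqrt(g²/(ε + g²)). -/
open scoped Classical

set_option linter.unusedSectionVars false
set_option maxHeartbeats 1000000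

section DLHelpers
variable {E : Type*} [NormedAddCommGroup E] [InnerProductSpace ℂ E] [FiniteDimensional ℂ E]

lemma DL.adj_eq (T : E →L[ℂ] E) (h : IsSelfAdjoint T) : ContinuousLinearMap.adjoint T = T :=
  (ContinuousLinearMap.star_eq_adjoint T).symm.trans h

lemma DL.inner_map_self (T : E →L[ℂ] E) (hsa : IsSelfAdjoint T) (hidem : T * T = T) (x : E) :
    (inner ℂ x (T x) : ℂ) = ((‖T x‖ ^ 2 : ℝ) : ℂ) := by
  have h1 : T x = T (T x) := by
    conv_lhs => rw [← hidem]
    simp [ContinuousLinearMap.mul_apply]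
  rw [h1, ← ContinuousLinearMap.adjoint_inner_left, DL.adj_eq T hsa]
  rw [← h1, inner_self_eq_norm_sq_to_K]
  norm_cast

lemma DL.pyth (T : E →L[ℂ] E) (hsa : IsSelfAdjoint T) (hidem : T * T = T) (x : E) :
    ‖T x‖ ^ 2 + ‖((1 : E →L[ℂ] E) - T) x‖ ^ 2 = ‖x‖ ^ 2 := by
  have hx : x = T x + ((1 : E →L[ℂ] E) - T) x := by
    simp [ContinuousLinearMap.sub_apply]
  have horth : (inner ℂ (T x) (((1 : E →L[ℂ] E) - T) x) : ℂ) = 0 := by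
    have h2 : (inner ℂ (T x) x : ℂ) = ((‖T x‖ ^ 2 : ℝ) : ℂ) := by
      conv_lhs => rw [← DL.adj_eq T hsa]
      rw [ContinuousLinearMap.adjoint_inner_left]
      exact DL.inner_map_self T hsa hidem x
    have h3 : (inner ℂ (T x) (T x) : ℂ) = ((‖T x‖ ^ 2 : ℝ) : ℂ) := by
      rw [inner_self_eq_norm_sq_to_K]; norm_cast
    simp [ContinuousLinearMap.sub_apply, inner_sub_right, h2, h3]
  calc ‖T x‖ ^ 2 + ‖((1 : E →L[ℂ] E) - T) x‖ ^ 2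
      = ‖T x + ((1 : E →L[ℂ] E) - T) x‖ ^ 2 := by
        rw [@norm_add_sq ℂ, horth]; simp
    _ = ‖x‖ ^ 2 := by rw [← hx]

lemma DL.norm_apply_le (T : E →L[ℂ] E) (hsa : IsSelfAdjoint T) (hidem : T * T = T) (x : E) :
    ‖T x‖ ≤ ‖x‖ := by
  have := DL.pyth T hsa hidem x
  nlinarith [norm_nonneg (((1 : E →L[ℂ] E) - T) x), norm_nonneg (T x), norm_nonneg x]

lemma DL.Qsa (T : E →L[ℂ] E) (hsa : IsSelfAdjoint T) : IsSelfAdjoint ((1 : E →L[ℂ] E) - T) := by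
  rw [IsSelfAdjoint, star_sub, star_one, hsa]

lemma DL.Qidem (T : E →L[ℂ] E) (hidem : T * T = T) :
    ((1 : E →L[ℂ] E) - T) * ((1 : E →L[ℂ] E) - T) = (1 : E →L[ℂ] E) - T := by
  simp only [mul_sub, sub_mul, one_mul, mul_one, hidem]; abel

lemma DL.pyth' (T : E →L[ℂ] E) (hsa : IsSelfAdjoint T) (hidem : T * T = T) (x : E) :
    ‖((1 : E →L[ℂ] E) - T) x‖ ^ 2 + ‖T x‖ ^ 2 = ‖x‖ ^ 2 := by
  have h := DL.pyth ((1 : E →L[ℂ] E) - T) (DL.Qsa T hsa) (DL.Qidem T hidem) x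
  have h2 : ((1 : E →L[ℂ] E) - ((1 : E →L[ℂ] E) - T)) = T := by abel
  rw [h2] at h
  exact h

lemma DL.drop_cons (N k : ℕ) (h : k < N) :
    List.drop k (List.finRange N) = ⟨k, h⟩ :: List.drop (k + 1) (List.finRange N) := by
  rw [List.drop_eq_getElem_cons (by simp [List.length_finRange]; omega)]
  congr 1
  simp [List.getElem_finRange]

lemma DL.filter_split {N : ℕ} (k : ℕ) (hk : k < N) :
    Finset.univ.filter (fun j : Fin N => k ≤ ↑j) =
      insert (⟨k, hk⟩ : Fin N) (Finset.univ.filter (fun j : Fin N => k + 1 ≤ ↑j)) := by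
  ext j
  simp only [Finset.mem_filter, Finset.mem_univ, true_and, Finset.mem_insert]
  constructor
  · intro h
    by_cases hj : (j : ℕ) = k
    · left; exact Fin.ext hj
    · right; omega
  · rintro (rfl | h)
    · exact le_refl _
    · omega

end DLHelpers

section DLCore
variable {E : Type*} [NormedAddCommGroup E] [InnerProductSpace ℂ E] [FiniteDimensional ℂ E]
variable {N : ℕ} (P : Fin N → (E →L[ℂ] E))

/-- Telescoping identity for partial products. -/
lemma DL.tele (hPsa : ∀ i, IsSelfAdjoint (P i)) (hPidem : ∀ i, P i * P i = P i) (χ : E) :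
    ∀ n k, k + n = N →
      ∑ j ∈ Finset.univ.filter (fun j : Fin N => k ≤ ↑j),
          ‖((1 : E →L[ℂ] E) - P j)
              ((((List.finRange N).drop (↑j + 1)).map P).prod χ)‖ ^ 2
        = ‖χ‖ ^ 2 - ‖((((List.finRange N).drop k).map P).prod) χ‖ ^ 2 := by
  intro n
  induction n with
  | zero =>
    intro k hk
    have h1 : Finset.univ.filter (fun j : Fin N => k ≤ ↑j) = ∅ := by
      ext j
      simp only [Finset.mem_filter, Finset.mem_univ, true_and, Finset.notMem_empty,
        iff_false, not_le]
      have := j.isLt; omega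
    have h2 : (List.finRange N).drop k = [] := by
      apply List.drop_eq_nil_of_le
      simp only [List.length_finRange]; omega
    rw [h1, h2]
    simp
  | succ n ih =>
    intro k hk
    have hkN : k < N := by omega
    rw [DL.filter_split k hkN, Finset.sum_insert (by simp)]
    rw [DL.drop_cons N k hkN]
    have hIH := ih (k + 1) (by omega)
    rw [hIH]
    have hprod : ((((⟨k, hkN⟩ : Fin N) :: (List.finRange N).drop (k + 1)).map P).prod) χ
        = P ⟨k, hkN⟩ (((((List.finRange N).drop (k + 1)).map P).prod) χ) := by
      simp [ContinuousLinearMap.mul_apply]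
    rw [hprod]
    have hpy := DL.pyth' (P ⟨k, hkN⟩) (hPsa _) (hPidem _)
      (((((List.finRange N).drop (k + 1)).map P).prod) χ)
    have hdr : ((⟨k, hkN⟩ : Fin N) : ℕ) + 1 = k + 1 := rfl
    rw [hdr]
    linarith

/-- The AAV moving lemma. -/
lemma DL.move (hPsa : ∀ i, IsSelfAdjoint (P i)) (hPidem : ∀ i, P i * P i = P i) (χ : E) :
    ∀ n k, k + n = N → ∀ i : Fin N, k ≤ ↑i →
      ‖((1 : E →L[ℂ] E) - P i) (((((List.finRange N).drop k).map P).prod) χ)‖ ≤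
        ∑ j ∈ Finset.univ.filter (fun j : Fin N => k ≤ ↑j),
          (if Commute ((1 : E →L[ℂ] E) - P i) ((1 : E →L[ℂ] E) - P j) then 0 else
            ‖((1 : E →L[ℂ] E) - P j)
              ((((List.finRange N).drop (↑j + 1)).map P).prod χ)‖) := by
  intro n
  induction n with
  | zero =>
    intro k hk i hi
    exact absurd i.isLt (by omega)
  | succ n ih =>
    intro k hk i hi
    have hkN : k < N := by omega
    set Q : Fin N → (E →L[ℂ] E) := fun m => (1 : E →L[ℂ] E) - P m with hQdef
    set y : E := (((((List.finRange N).drop (k + 1)).map P).prod) χ) with hy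
    have hprod : (((((List.finRange N).drop k).map P).prod) χ) = P ⟨k, hkN⟩ y := by
      rw [DL.drop_cons N k hkN]
      simp [ContinuousLinearMap.mul_apply, hy]
    have hsplit := DL.filter_split (N := N) k hkN
    rw [hprod, hsplit, Finset.sum_insert (by simp)]
    have hsum_nonneg : (0:ℝ) ≤ ∑ j ∈ Finset.univ.filter (fun j : Fin N => k + 1 ≤ ↑j),
        (if Commute (Q i) (Q j) then 0 else
          ‖Q j ((((List.finRange N).drop (↑j + 1)).map P).prod χ)‖) := by
      refine Finset.sum_nonneg (fun t _ => ?_)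
      split <;> positivity
    by_cases hik : i = ⟨k, hkN⟩
    · have hz0 : Q ⟨k, hkN⟩ (P ⟨k, hkN⟩ y) = 0 := by
        have h2 : P ⟨k, hkN⟩ (P ⟨k, hkN⟩ y) = P ⟨k, hkN⟩ y := by
          rw [← ContinuousLinearMap.mul_apply, hPidem]
        simp [hQdef, ContinuousLinearMap.sub_apply, h2]
      have hz : Q i (P ⟨k, hkN⟩ y) = 0 := by rw [hik]; exact hz0
      rw [hz]
      simp only [norm_zero]
      refine add_nonneg ?_ hsum_nonneg
      split <;> positivity
    · have hi' : k + 1 ≤ ↑i := by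
        rcases Nat.lt_or_ge k ↑i with h | h
        · omega
        · exact absurd (Fin.ext (by omega : (i:ℕ) = k)) hik
      have hIH := ih (k + 1) (by omega) i hi'
      by_cases hcomm : Commute (Q i) (Q ⟨k, hkN⟩)
      · have hcP : Commute (Q i) (P ⟨k, hkN⟩) := by
          have h1 : Commute (Q i) (1 : E →L[ℂ] E) := Commute.one_right _
          have h2 := h1.sub_right hcomm
          simpa [hQdef] using h2
        have hmove : Q i (P ⟨k, hkN⟩ y) = P ⟨k, hkN⟩ (Q i y) := by
          calc Q i (P ⟨k, hkN⟩ y) = (Q i * P ⟨k, hkN⟩) y := rfl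
            _ = (P ⟨k, hkN⟩ * Q i) y := by rw [hcP.eq]
            _ = P ⟨k, hkN⟩ (Q i y) := rfl
        rw [hmove, if_pos hcomm, zero_add]
        calc ‖P ⟨k, hkN⟩ (Q i y)‖ ≤ ‖Q i y‖ :=
              DL.norm_apply_le (P ⟨k, hkN⟩) (hPsa _) (hPidem _) _
          _ ≤ _ := hIH
      · have hexp : Q i (P ⟨k, hkN⟩ y) = Q i y - Q i (Q ⟨k, hkN⟩ y) := by
          have hPy : P ⟨k, hkN⟩ y = y - Q ⟨k, hkN⟩ y := by
            simp [hQdef, ContinuousLinearMap.sub_apply]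
          rw [hPy, map_sub]
        rw [hexp, if_neg hcomm]
        have hQnorm : ‖Q i (Q ⟨k, hkN⟩ y)‖ ≤ ‖Q ⟨k, hkN⟩ y‖ :=
          DL.norm_apply_le (Q i) (DL.Qsa _ (hPsa i)) (DL.Qidem _ (hPidem i)) _
        have hky : Q ⟨k, hkN⟩ y
            = Q ⟨k, hkN⟩ ((((List.finRange N).drop ((⟨k, hkN⟩ : Fin N) + 1)).map P).prod χ) := rfl
        calc ‖Q i y - Q i (Q ⟨k, hkN⟩ y)‖
            ≤ ‖Q i y‖ + ‖Q i (Q ⟨k, hkN⟩ y)‖ := norm_sub_le _ _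
          _ ≤ (∑ j ∈ Finset.univ.filter (fun j : Fin N => k + 1 ≤ ↑j),
                (if Commute (Q i) (Q j) then 0 else
                  ‖Q j ((((List.finRange N).drop (↑j + 1)).map P).prod χ)‖))
              + ‖Q ⟨k, hkN⟩ y‖ := by
              exact add_le_add hIH hQnorm
          _ = ‖Q ⟨k, hkN⟩ ((((List.finRange N).drop (↑(⟨k, hkN⟩ : Fin N) + 1)).map P).prod χ)‖
              + ∑ j ∈ Finset.univ.filter (fun j : Fin N => k + 1 ≤ ↑j),
                (if Commute (Q i) (Q j) then 0 else
                  ‖Q j ((((List.finRange N).drop (↑j + 1)).map P).prod χ)‖) := add_comm _ _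

end DLCore

section DLSpec
variable {E : Type*} [NormedAddCommGroup E] [InnerProductSpace ℂ E] [FiniteDimensional ℂ E]
variable {N : ℕ} (P : Fin N → (E →L[ℂ] E))

lemma DL.hinner (hPsa : ∀ i, IsSelfAdjoint (P i)) (hPidem : ∀ i, P i * P i = P i)
    (H : E →L[ℂ] E) (hH : H = ∑ i, (1 - P i)) (x : E) :
    (inner ℂ x (H x) : ℂ) = ((∑ i, ‖((1 : E →L[ℂ] E) - P i) x‖ ^ 2 : ℝ) : ℂ) := by
  rw [hH, ContinuousLinearMap.sum_apply, inner_sum, Complex.ofReal_sum]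
  exact Finset.sum_congr rfl fun i _ =>
    DL.inner_map_self _ (DL.Qsa _ (hPsa i)) (DL.Qidem _ (hPidem i)) x

lemma DL.Hsa (hPsa : ∀ i, IsSelfAdjoint (P i))
    (H : E →L[ℂ] E) (hH : H = ∑ i, (1 - P i)) : IsSelfAdjoint H := by
  rw [hH]
  refine Finset.sum_induction _ IsSelfAdjoint (fun a b ha hb => ha.add hb) ?_ ?_
  · rw [IsSelfAdjoint, star_zero]
  · intro i _
    exact DL.Qsa _ (hPsa i)

lemma DL.eps_pos (hPsa : ∀ i, IsSelfAdjoint (P i)) (hPidem : ∀ i, P i * P i = P i)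
    (H : E →L[ℂ] E) (hH : H = ∑ i, (1 - P i)) (ε : ℝ)
    (hε : IsLeast {μ : ℝ | μ ≠ 0 ∧ Module.End.HasEigenvalue (H : E →ₗ[ℂ] E) (μ : ℂ)} ε) :
    0 < ε := by
  obtain ⟨hne, heig⟩ := hε.1
  obtain ⟨v, hv⟩ := heig.exists_hasEigenvector
  have hv0 : v ≠ 0 := hv.2
  have happ : H v = ((ε : ℝ) : ℂ) • v := by
    have := hv.apply_eq_smul
    rwa [ContinuousLinearMap.coe_coe] at this
  have h1 : (inner ℂ v (H v) : ℂ) = ((ε * ‖v‖ ^ 2 : ℝ) : ℂ) := by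
    rw [happ, inner_smul_right, inner_self_eq_norm_sq_to_K]
    push_cast
    rfl
  have h2 := DL.hinner P hPsa hPidem H hH v
  rw [h1] at h2
  have h3 : ε * ‖v‖ ^ 2 = ∑ i, ‖((1 : E →L[ℂ] E) - P i) v‖ ^ 2 := by exact_mod_cast h2
  have h4 : 0 ≤ ε * ‖v‖ ^ 2 := by rw [h3]; positivity
  have h5 : 0 < ‖v‖ ^ 2 := pow_pos (norm_pos_iff.mpr hv0) 2
  rcases hne.lt_or_gt with h | h
  · nlinarith
  · exact h

lemma DL.spec (hPsa : ∀ i, IsSelfAdjoint (P i)) (hPidem : ∀ i, P i * P i = P i)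
    (H : E →L[ℂ] E) (hH : H = ∑ i, (1 - P i))
    (G : E →L[ℂ] E) (hGsa : IsSelfAdjoint G)
    (hGrange : LinearMap.range (G : E →ₗ[ℂ] E) = LinearMap.ker (H : E →ₗ[ℂ] E))
    (ε : ℝ)
    (hε : IsLeast {μ : ℝ | μ ≠ 0 ∧ Module.End.HasEigenvalue (H : E →ₗ[ℂ] E) (μ : ℂ)} ε)
    (x : E) (hx : G x = 0) :
    ε * ‖x‖ ^ 2 ≤ ∑ i, ‖((1 : E →L[ℂ] E) - P i) x‖ ^ 2 := by
  have hHsa : IsSelfAdjoint H := DL.Hsa P hPsa H hH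
  have hT : LinearMap.IsSymmetric (↑H : E →ₗ[ℂ] E) :=
    ContinuousLinearMap.isSelfAdjoint_iff_isSymmetric.mp hHsa
  have hn : Module.finrank ℂ E = Module.finrank ℂ E := rfl
  set b := hT.eigenvectorBasis hn with hb
  set μ := hT.eigenvalues hn with hμdef
  have heig : ∀ i, (↑H : E →ₗ[ℂ] E) (b i) = ((μ i : ℝ) : ℂ) • b i := fun i =>
    hT.apply_eigenvectorBasis hn i
  have heig' : ∀ i, H (b i) = ((μ i : ℝ) : ℂ) • b i := by
    intro i
    have := heig i
    rwa [ContinuousLinearMap.coe_coe] at this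
  have hμ : ∀ i, μ i = 0 ∨ ε ≤ μ i := by
    intro i
    by_cases h : μ i = 0
    · exact Or.inl h
    · refine Or.inr (hε.2 ⟨h, ?_⟩)
      exact Module.End.hasEigenvalue_of_hasEigenvector
        ⟨Module.End.mem_eigenspace_iff.mpr (heig i), b.orthonormal.ne_zero i⟩
  have hrepr0 : ∀ i, μ i = 0 → b.repr x i = 0 := by
    intro i h0
    have hker : H (b i) = 0 := by
      have := heig' i
      rw [h0] at this
      simpa using this
    have hmem : b i ∈ LinearMap.range (G : E →ₗ[ℂ] E) := by
      rw [hGrange, LinearMap.mem_ker]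
      exact hker
    obtain ⟨z, hz⟩ := hmem
    rw [OrthonormalBasis.repr_apply_apply, ← hz]
    calc (inner ℂ (G z) x : ℂ) = inner ℂ z (G x) := by
          conv_lhs => rw [← DL.adj_eq G hGsa]
          rw [ContinuousLinearMap.adjoint_inner_left]
      _ = 0 := by rw [hx, inner_zero_right]
  have hnormsq : ‖x‖ ^ 2 = ∑ i, ‖b.repr x i‖ ^ 2 := by
    have h1 : ‖x‖ = ‖b.repr x‖ := (b.repr.norm_map x).symm
    rw [h1, EuclideanSpace.norm_eq, Real.sq_sqrt (by positivity)]
  have hip : (inner ℂ x (H x) : ℂ) = ((∑ i, μ i * ‖b.repr x i‖ ^ 2 : ℝ) : ℂ) := by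
    have h1 : (inner ℂ x (H x) : ℂ) = inner ℂ (b.repr x) (b.repr (H x)) :=
      (b.repr.inner_map_map x (H x)).symm
    rw [h1, PiLp.inner_apply]
    push_cast
    refine Finset.sum_congr rfl (fun i _ => ?_)
    have h2 : b.repr (H x) i = ((μ i : ℝ) : ℂ) * b.repr x i := by
      rw [OrthonormalBasis.repr_apply_apply, OrthonormalBasis.repr_apply_apply]
      have h3 : (inner ℂ (b i) (H x) : ℂ) = inner ℂ (H (b i)) x := by
        rw [← ContinuousLinearMap.adjoint_inner_left, DL.adj_eq H hHsa]
      rw [h3, heig' i, inner_smul_left, Complex.conj_ofReal]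
    rw [h2, RCLike.inner_apply]
    rw [mul_assoc, RCLike.mul_conj]
    push_cast
    rfl
  have hcombine : ∑ i, ‖((1 : E →L[ℂ] E) - P i) x‖ ^ 2 = ∑ i, μ i * ‖b.repr x i‖ ^ 2 := by
    have h1 := DL.hinner P hPsa hPidem H hH x
    rw [hip] at h1
    exact_mod_cast h1.symm
  rw [hcombine, hnormsq, Finset.mul_sum]
  refine Finset.sum_le_sum (fun i _ => ?_)
  rcases hμ i with h | h
  · rw [h, hrepr0 i h]
    simp
  · exact mul_le_mul_of_nonneg_right h (by positivity)

end DLSpec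

/-- Detectability lemma: for a frustration-free Hamiltonian `H = ∑ i, H_i` with projector
local terms `H_i = 1 - P_i`, ground-space projector `G`, spectral gap `ε` (the smallest
nonzero eigenvalue of `H`) and maximum interaction degree `g`, the product
`P = P_1 ⋯ P_N` satisfies `‖P - G‖ ≤ sqrt (g² / (ε + g²))`. -/
theorem detectability_lemma
    {E : Type*} [NormedAddCommGroup E] [InnerProductSpace ℂ E] [FiniteDimensional ℂ E]
    {N : ℕ} (P : Fin N → (E →L[ℂ] E))
    (hPsa : ∀ i, IsSelfAdjoint (P i)) (hPidem : ∀ i, P i * P i = P i)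
    (H : E →L[ℂ] E) (hH : H = ∑ i, (1 - P i))
    (hFF : ∃ ψ : E, ψ ≠ 0 ∧ H ψ = 0)
    (G : E →L[ℂ] E) (hGsa : IsSelfAdjoint G) (hGidem : G * G = G)
    (hGrange : LinearMap.range (G : E →ₗ[ℂ] E) = LinearMap.ker (H : E →ₗ[ℂ] E))
    (ε : ℝ)
    (hε : IsLeast {μ : ℝ | μ ≠ 0 ∧
      Module.End.HasEigenvalue (H : E →ₗ[ℂ] E) (μ : ℂ)} ε)
    (g : ℕ)
    (hg : (g : ℕ) = Finset.univ.sup fun i =>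
      (Finset.univ.filter fun j => ¬ Commute ((1 : E →L[ℂ] E) - P i) (1 - P j)).card) :
    ‖(List.ofFn P).prod - G‖ ≤ Real.sqrt ((g : ℝ) ^ 2 / (ε + (g : ℝ) ^ 2)) := by
  have hεpos : 0 < ε := DL.eps_pos P hPsa hPidem H hH ε hε
  -- kernel facts
  have hkerQ : ∀ x : E, H x = 0 → ∀ i, ((1 : E →L[ℂ] E) - P i) x = 0 := by
    intro x hx i
    have h1 := DL.hinner P hPsa hPidem H hH x
    rw [hx, inner_zero_right] at h1
    have h2 : (∑ i, ‖((1 : E →L[ℂ] E) - P i) x‖ ^ 2) = 0 := by exact_mod_cast h1.symm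
    have h3 := (Finset.sum_eq_zero_iff_of_nonneg
      (fun i _ => by positivity)).mp h2 i (Finset.mem_univ i)
    have h4 : ‖((1 : E →L[ℂ] E) - P i) x‖ = 0 := by
      nlinarith [norm_nonneg (((1 : E →L[ℂ] E) - P i) x)]
    exact norm_eq_zero.mp h4
  have hPG : ∀ i, P i * G = G := by
    intro i
    ext z
    have hz : H (G z) = 0 := by
      have hm : G z ∈ LinearMap.range (G : E →ₗ[ℂ] E) := ⟨z, rfl⟩
      rw [hGrange, LinearMap.mem_ker] at hm
      exact hm
    have h1 := hkerQ (G z) hz i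
    have h2 : G z - P i (G z) = 0 := by
      simpa [ContinuousLinearMap.sub_apply] using h1
    simpa [ContinuousLinearMap.mul_apply] using (sub_eq_zero.mp h2).symm
  have hGP : ∀ i, G * P i = G := by
    intro i
    have h1 := congrArg star (hPG i)
    rwa [star_mul, hGsa.star_eq, (hPsa i).star_eq] at h1
  have hprodG : ∀ l : List (Fin N), ((l.map P).prod) * G = G := by
    intro l
    induction l with
    | nil => simp
    | cons j l' ih => rw [List.map_cons, List.prod_cons, mul_assoc, ih, hPG j]
  have hGprod : ∀ l : List (Fin N), G * ((l.map P).prod) = G := by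
    intro l
    induction l with
    | nil => simp
    | cons j l' ih => rw [List.map_cons, List.prod_cons, ← mul_assoc, hGP j, ih]
  -- degree bound
  have hcard : ∀ i : Fin N, (Finset.univ.filter fun j =>
      ¬ Commute ((1 : E →L[ℂ] E) - P i) (1 - P j)).card ≤ g := by
    intro i
    rw [hg]
    exact Finset.le_sup (f := fun i => (Finset.univ.filter fun j =>
      ¬ Commute ((1 : E →L[ℂ] E) - P i) (1 - P j)).card) (Finset.mem_univ i)
  set c : ℝ := (g : ℝ) ^ 2 / (ε + (g : ℝ) ^ 2) with hc
  have hgε : 0 < ε + (g : ℝ) ^ 2 := by positivity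
  have hcnn : 0 ≤ c := div_nonneg (by positivity) hgε.le
  set Pi0 : E →L[ℂ] E := (((List.finRange N)).map P).prod with hPi0
  have hofFn : (List.ofFn P).prod = Pi0 := by rw [List.ofFn_eq_map, hPi0]
  -- the key estimate
  have key : ∀ χ : E, G χ = 0 → (ε + (g : ℝ) ^ 2) * ‖Pi0 χ‖ ^ 2 ≤ (g : ℝ) ^ 2 * ‖χ‖ ^ 2 := by
    intro χ hχ
    set a : Fin N → ℝ := fun j =>
      ‖((1 : E →L[ℂ] E) - P j) ((((List.finRange N).drop (↑j + 1)).map P).prod χ)‖ with ha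
    have hφdrop : ((((List.finRange N).drop 0).map P).prod) = Pi0 := by
      rw [List.drop_zero, hPi0]
    have hfilter0 : Finset.univ.filter (fun j : Fin N => (0:ℕ) ≤ (j:ℕ))
        = (Finset.univ : Finset (Fin N)) := by
      apply Finset.filter_true_of_mem
      intro _ _
      exact Nat.zero_le _
    have htele := DL.tele P hPsa hPidem χ N 0 (by omega)
    rw [hφdrop, hfilter0] at htele
    have hmove : ∀ i : Fin N, ‖((1 : E →L[ℂ] E) - P i) (Pi0 χ)‖ ≤
        ∑ j, (if Commute ((1 : E →L[ℂ] E) - P i) (1 - P j) then 0 else a j) := by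
      intro i
      have h1 := DL.move P hPsa hPidem χ N 0 (by omega) i (Nat.zero_le _)
      rwa [hφdrop, hfilter0] at h1
    have hmovesq : ∀ i : Fin N, ‖((1 : E →L[ℂ] E) - P i) (Pi0 χ)‖ ^ 2 ≤
        (g : ℝ) * ∑ j, (if Commute ((1 : E →L[ℂ] E) - P i) (1 - P j) then 0
          else (a j) ^ 2) := by
      intro i
      set S := Finset.univ.filter
        (fun j => ¬ Commute ((1 : E →L[ℂ] E) - P i) (1 - P j)) with hS
      have h1 : (∑ j, (if Commute ((1 : E →L[ℂ] E) - P i) (1 - P j) then 0 else a j))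
          = ∑ j ∈ S, a j := by
        rw [hS, Finset.sum_filter]
        refine Finset.sum_congr rfl (fun j _ => ?_)
        by_cases h : Commute ((1 : E →L[ℂ] E) - P i) (1 - P j) <;> simp [h]
      have h2 : (∑ j, (if Commute ((1 : E →L[ℂ] E) - P i) (1 - P j) then 0
            else (a j) ^ 2)) = ∑ j ∈ S, (a j) ^ 2 := by
        rw [hS, Finset.sum_filter]
        refine Finset.sum_congr rfl (fun j _ => ?_)
        by_cases h : Commute ((1 : E →L[ℂ] E) - P i) (1 - P j) <;> simp [h]
      rw [h2]
      have h3 : ‖((1 : E →L[ℂ] E) - P i) (Pi0 χ)‖ ^ 2 ≤ (∑ j ∈ S, a j) ^ 2 := by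
        rw [← h1]
        exact pow_le_pow_left₀ (norm_nonneg _) (hmove i) 2
      have h4 : (∑ j ∈ S, a j) ^ 2 ≤ (S.card : ℝ) * ∑ j ∈ S, (a j) ^ 2 := by
        have h5 := Finset.sum_mul_sq_le_sq_mul_sq S (fun _ => (1 : ℝ)) a
        simpa [Finset.sum_const, nsmul_eq_mul] using h5
      have h5 : (S.card : ℝ) ≤ (g : ℝ) := by exact_mod_cast hcard i
      have h6 : (0:ℝ) ≤ ∑ j ∈ S, (a j) ^ 2 := Finset.sum_nonneg fun j _ => by positivity
      calc ‖((1 : E →L[ℂ] E) - P i) (Pi0 χ)‖ ^ 2 ≤ (∑ j ∈ S, a j) ^ 2 := h3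
        _ ≤ (S.card : ℝ) * ∑ j ∈ S, (a j) ^ 2 := h4
        _ ≤ (g : ℝ) * ∑ j ∈ S, (a j) ^ 2 := mul_le_mul_of_nonneg_right h5 h6
    have hswap : ∑ i : Fin N, ∑ j : Fin N,
          (if Commute ((1 : E →L[ℂ] E) - P i) (1 - P j) then 0 else (a j) ^ 2)
        ≤ (g : ℝ) * ∑ j, (a j) ^ 2 := by
      rw [Finset.sum_comm]
      have hcol : ∀ j : Fin N, ∑ i : Fin N,
          (if Commute ((1 : E →L[ℂ] E) - P i) (1 - P j) then 0 else (a j) ^ 2)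
          ≤ (g : ℝ) * (a j) ^ 2 := by
        intro j
        have h1 : ∑ i : Fin N,
            (if Commute ((1 : E →L[ℂ] E) - P i) (1 - P j) then 0 else (a j) ^ 2)
            = ∑ _i ∈ Finset.univ.filter
                (fun i => ¬ Commute ((1 : E →L[ℂ] E) - P i) (1 - P j)), (a j) ^ 2 := by
          rw [Finset.sum_filter]
          refine Finset.sum_congr rfl (fun i _ => ?_)
          by_cases h : Commute ((1 : E →L[ℂ] E) - P i) (1 - P j) <;> simp [h]
        rw [h1, Finset.sum_const, nsmul_eq_mul]
        have h2 : (Finset.univ.filter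
              (fun i => ¬ Commute ((1 : E →L[ℂ] E) - P i) (1 - P j))).card
            = (Finset.univ.filter
              (fun i' => ¬ Commute ((1 : E →L[ℂ] E) - P j) (1 - P i'))).card := by
          congr 1
          refine Finset.filter_congr (fun i _ => ?_)
          exact not_congr ⟨fun h => h.symm, fun h => h.symm⟩
        have h3 : ((Finset.univ.filter
              (fun i => ¬ Commute ((1 : E →L[ℂ] E) - P i) (1 - P j))).card : ℝ)
            ≤ (g : ℝ) := by
          rw [h2]
          exact_mod_cast hcard j
        exact mul_le_mul_of_nonneg_right h3 (by positivity)
      calc ∑ j : Fin N, ∑ i : Fin N,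
            (if Commute ((1 : E →L[ℂ] E) - P i) (1 - P j) then 0 else (a j) ^ 2)
          ≤ ∑ j, (g : ℝ) * (a j) ^ 2 := Finset.sum_le_sum (fun j _ => hcol j)
        _ = (g : ℝ) * ∑ j, (a j) ^ 2 := (Finset.mul_sum _ _ _).symm
    have hGφ : G (Pi0 χ) = 0 := by
      have h1 : G (Pi0 χ) = (G * Pi0) χ := rfl
      rw [h1, hPi0, hGprod, hχ]
    have hspec := DL.spec P hPsa hPidem H hH G hGsa hGrange ε hε (Pi0 χ) hGφ
    have hchain : ε * ‖Pi0 χ‖ ^ 2 ≤ (g : ℝ) ^ 2 * (‖χ‖ ^ 2 - ‖Pi0 χ‖ ^ 2) := by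
      calc ε * ‖Pi0 χ‖ ^ 2
          ≤ ∑ i, ‖((1 : E →L[ℂ] E) - P i) (Pi0 χ)‖ ^ 2 := hspec
        _ ≤ ∑ i : Fin N, (g : ℝ) * ∑ j,
              (if Commute ((1 : E →L[ℂ] E) - P i) (1 - P j) then 0 else (a j) ^ 2) :=
            Finset.sum_le_sum fun i _ => hmovesq i
        _ = (g : ℝ) * ∑ i : Fin N, ∑ j,
              (if Commute ((1 : E →L[ℂ] E) - P i) (1 - P j) then 0 else (a j) ^ 2) :=
            (Finset.mul_sum _ _ _).symm
        _ ≤ (g : ℝ) * ((g : ℝ) * ∑ j, (a j) ^ 2) :=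
            mul_le_mul_of_nonneg_left hswap (by positivity)
        _ = (g : ℝ) ^ 2 * (‖χ‖ ^ 2 - ‖Pi0 χ‖ ^ 2) := by rw [htele]; ring
    nlinarith [hchain]
  -- conclude
  rw [hofFn]
  refine ContinuousLinearMap.opNorm_le_bound _ (Real.sqrt_nonneg _) (fun ψ => ?_)
  set χ := ψ - G ψ with hχdef
  have hGχ : G χ = 0 := by
    rw [hχdef, map_sub]
    have h1 : G (G ψ) = G ψ := by rw [← ContinuousLinearMap.mul_apply, hGidem]
    rw [h1, sub_self]
  have happly : (Pi0 - G) ψ = Pi0 χ := by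
    rw [hχdef, map_sub]
    have h1 : Pi0 (G ψ) = G ψ := by
      rw [← ContinuousLinearMap.mul_apply, hPi0, hprodG]
    rw [ContinuousLinearMap.sub_apply, h1]
  have hχle : ‖χ‖ ≤ ‖ψ‖ := by
    have hpy := DL.pyth G hGsa hGidem ψ
    have h1 : ((1 : E →L[ℂ] E) - G) ψ = χ := by
      simp [hχdef, ContinuousLinearMap.sub_apply]
    rw [h1] at hpy
    nlinarith [norm_nonneg χ, norm_nonneg ψ, norm_nonneg (G ψ)]
  have hkey := key χ hGχ
  have hsq : ‖Pi0 χ‖ ^ 2 ≤ c * ‖ψ‖ ^ 2 := by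
    rw [hc, div_mul_eq_mul_div, le_div_iff₀ hgε]
    have h1 : (g : ℝ) ^ 2 * ‖χ‖ ^ 2 ≤ (g : ℝ) ^ 2 * ‖ψ‖ ^ 2 := by
      apply mul_le_mul_of_nonneg_left _ (by positivity)
      nlinarith [norm_nonneg χ, norm_nonneg ψ]
    nlinarith
  rw [happly]
  have h2 : ‖Pi0 χ‖ = Real.sqrt (‖Pi0 χ‖ ^ 2) := (Real.sqrt_sq (norm_nonneg _)).symm
  rw [h2]
  calc Real.sqrt (‖Pi0 χ‖ ^ 2) ≤ Real.sqrt (c * ‖ψ‖ ^ 2) := Real.sqrt_le_sqrt hsq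
    _ = Real.sqrt c * ‖ψ‖ := by
        rw [Real.sqrt_mul hcnn, Real.sqrt_sq (norm_nonneg _)]
end

section
/- In the detectability lemma setting, for any vector ψ the following energy bound holds: ⟨ψ| P† H P |ψ⟩ ≤ g² (‖ψ‖² - ‖Pψ‖²), where P = P_1 ⋯ P_N, H = Σ_i H_i with H_i = 1 - P_i projectors, and g is the maximum interaction degree. -/
open scoped Classical InnerProductSpace

set_option linter.unusedSectionVars false

section Aux

variable {E : Type*} [NormedAddCommGroup E] [InnerProductSpace ℂ E] [FiniteDimensional ℂ E]
  {N : ℕ}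

lemma DL_sa_inner (T : E →L[ℂ] E) (hT : IsSelfAdjoint T) (x y : E) :
    ⟪T x, y⟫_ℂ = ⟪x, T y⟫_ℂ := by
  have h : ContinuousLinearMap.adjoint T = T := by
    rw [← ContinuousLinearMap.star_eq_adjoint, hT]
  conv_lhs => rw [← h]
  exact ContinuousLinearMap.adjoint_inner_left T y x

lemma DL_inner_self (T : E →L[ℂ] E) (hT : IsSelfAdjoint T) (hT2 : T * T = T) (x : E) :
    (⟪x, T x⟫_ℂ).re = ‖T x‖ ^ 2 := by
  have h1 : T x = T (T x) := by
    conv_lhs => rw [← hT2]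
    exact ContinuousLinearMap.mul_apply T T x
  rw [h1, ← DL_sa_inner T hT x (T x), ← h1]
  rw [inner_self_eq_norm_sq_to_K (𝕜 := ℂ) (T x)]
  simp [← Complex.ofReal_pow]

lemma DL_contract (T : E →L[ℂ] E) (hT : IsSelfAdjoint T) (hT2 : T * T = T) (x : E) :
    ‖T x‖ ≤ ‖x‖ := by
  rcases eq_or_lt_of_le (norm_nonneg (T x)) with h0 | h0
  · rw [← h0]; exact norm_nonneg x
  have h : ‖T x‖ ^ 2 = (⟪x, T x⟫_ℂ).re := (DL_inner_self T hT hT2 x).symm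
  have hle : (⟪x, T x⟫_ℂ).re ≤ ‖x‖ * ‖T x‖ := by
    calc (⟪x, T x⟫_ℂ).re ≤ ‖⟪x, T x⟫_ℂ‖ := Complex.re_le_norm _
    _ ≤ ‖x‖ * ‖T x‖ := norm_inner_le_norm x (T x)
  nlinarith [h, hle, h0]

lemma DL_proj_orth (T : E →L[ℂ] E) (hT : IsSelfAdjoint T) (hT2 : T * T = T) (x : E) :
    ⟪T x, (1 - T) x⟫_ℂ = 0 := by
  rw [DL_sa_inner T hT]
  have : T ((1 - T) x) = 0 := by
    have h : T * (1 - T) = 0 := by rw [mul_sub, mul_one, hT2, sub_self]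
    calc T ((1 - T) x) = (T * (1 - T)) x := rfl
    _ = 0 := by rw [h]; rfl
  rw [this, inner_zero_right]

lemma DL_pythag (T : E →L[ℂ] E) (hT : IsSelfAdjoint T) (hT2 : T * T = T) (x : E) :
    ‖x‖ ^ 2 = ‖T x‖ ^ 2 + ‖(1 - T) x‖ ^ 2 := by
  have hx : x = T x + (1 - T) x := by
    simp [ContinuousLinearMap.sub_apply]
  have h := norm_add_sq (𝕜 := ℂ) (T x) ((1 - T) x)
  rw [DL_proj_orth T hT hT2 x] at h
  simp only [map_zero, mul_zero, add_zero] at h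
  conv_lhs => rw [hx]
  rw [h]

lemma DL_sub_sa (T : E →L[ℂ] E) (hT : IsSelfAdjoint T) : IsSelfAdjoint (1 - T) :=
  (IsSelfAdjoint.one (E →L[ℂ] E)).sub hT

lemma DL_sub_idem (T : E →L[ℂ] E) (hT2 : T * T = T) : (1 - T) * (1 - T) = 1 - T := by
  rw [sub_mul, one_mul, mul_sub, mul_one, hT2, sub_self, sub_zero]

/-- Extension of `P` to `ℕ` by the identity. -/
noncomputable def DLP' (P : Fin N → (E →L[ℂ] E)) (k : ℕ) : E →L[ℂ] E :=
  if h : k < N then P ⟨k, h⟩ else 1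

/-- Suffix products. -/
noncomputable def DLQ (P : Fin N → (E →L[ℂ] E)) (k : ℕ) : E →L[ℂ] E :=
  ((List.ofFn P).drop k).prod

lemma DLQ_top (P : Fin N → (E →L[ℂ] E)) {k : ℕ} (hk : N ≤ k) : DLQ P k = 1 := by
  unfold DLQ
  rw [List.drop_eq_nil_of_le (by simpa using hk), List.prod_nil]

lemma DLQ_succ (P : Fin N → (E →L[ℂ] E)) {k : ℕ} (hk : k < N) :
    DLQ P k = DLP' P k * DLQ P (k + 1) := by
  unfold DLQ DLP'
  rw [List.drop_eq_getElem_cons (by simpa using hk), List.prod_cons, dif_pos hk]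
  congr 1
  simp

lemma DLP'_sa (P : Fin N → (E →L[ℂ] E)) (hPsa : ∀ i, IsSelfAdjoint (P i)) (k : ℕ) :
    IsSelfAdjoint (DLP' P k) := by
  unfold DLP'; split
  · exact hPsa _
  · exact IsSelfAdjoint.one (E →L[ℂ] E)

lemma DLP'_idem (P : Fin N → (E →L[ℂ] E)) (hPidem : ∀ i, P i * P i = P i) (k : ℕ) :
    DLP' P k * DLP' P k = DLP' P k := by
  unfold DLP'; split
  · exact hPidem _
  · exact one_mul 1

lemma DL_key (P : Fin N → (E →L[ℂ] E)) (hPsa : ∀ i, IsSelfAdjoint (P i))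
    (hPidem : ∀ i, P i * P i = P i) (ψ : E) (i : Fin N) :
    ∀ d k, k + d = (i : ℕ) →
      ‖(1 - P i) (DLQ P k ψ)‖ ≤ ∑ j ∈ Finset.Ico k (i : ℕ),
        (if ¬ Commute ((1 : E →L[ℂ] E) - P i) (1 - DLP' P j) then
          ‖(1 - DLP' P j) (DLQ P (j + 1) ψ)‖ else 0) := by
  intro d
  induction d with
  | zero =>
    intro k hk
    simp only [Nat.add_zero] at hk
    subst hk
    rw [Finset.Ico_self, Finset.sum_empty]
    rw [DLQ_succ P i.isLt]
    have h1 : (DLP' P (i : ℕ) * DLQ P ((i : ℕ) + 1)) ψ = P i (DLQ P ((i : ℕ) + 1) ψ) := by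
      rw [ContinuousLinearMap.mul_apply]
      congr 1
      unfold DLP'
      rw [dif_pos i.isLt]
    rw [h1]
    have h2 : (1 - P i) (P i (DLQ P ((i : ℕ) + 1) ψ)) = 0 := by
      have e1 : (1 - P i) (P i (DLQ P ((i : ℕ) + 1) ψ))
          = ((1 - P i) * P i) (DLQ P ((i : ℕ) + 1) ψ) := rfl
      have e2 : ((1 : E →L[ℂ] E) - P i) * P i = 0 := by
        rw [sub_mul, one_mul, hPidem i, sub_self]
      rw [e1, e2]
      rfl
    rw [h2, norm_zero]
  | succ d ih =>
    intro k hk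
    have hkN : k < N := by have := i.isLt; omega
    have hki : k < (i : ℕ) := by omega
    have hIH := ih (k + 1) (by omega)
    rw [Finset.sum_eq_sum_Ico_succ_bot hki]
    rw [DLQ_succ P hkN]
    have happ : (DLP' P k * DLQ P (k + 1)) ψ = DLP' P k (DLQ P (k + 1) ψ) := rfl
    rw [happ]
    set v := DLQ P (k + 1) ψ with hv
    by_cases hc : Commute ((1 : E →L[ℂ] E) - P i) (1 - DLP' P k)
    · rw [if_neg (by simpa using hc), zero_add]
      have hcomm : Commute ((1 : E →L[ℂ] E) - P i) (DLP' P k) := by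
        have h := (Commute.one_right ((1 : E →L[ℂ] E) - P i)).sub_right hc
        rwa [sub_sub_cancel] at h
      have heq : (1 - P i) (DLP' P k v) = DLP' P k ((1 - P i) v) := by
        rw [← ContinuousLinearMap.mul_apply, hcomm.eq, ContinuousLinearMap.mul_apply]
      rw [heq]
      exact le_trans (DL_contract _ (DLP'_sa P hPsa k) (DLP'_idem P hPidem k) _) hIH
    · rw [if_pos hc]
      have hsplit : (1 - P i) (DLP' P k v) = (1 - P i) v - (1 - P i) ((1 - DLP' P k) v) := by
        have h : DLP' P k v = v - (1 - DLP' P k) v := by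
          simp [ContinuousLinearMap.sub_apply]
        rw [h, map_sub]
      rw [hsplit]
      calc ‖(1 - P i) v - (1 - P i) ((1 - DLP' P k) v)‖
          ≤ ‖(1 - P i) v‖ + ‖(1 - P i) ((1 - DLP' P k) v)‖ := norm_sub_le _ _
        _ ≤ (∑ j ∈ Finset.Ico (k + 1) (i : ℕ),
              (if ¬ Commute ((1 : E →L[ℂ] E) - P i) (1 - DLP' P j) then
                ‖(1 - DLP' P j) (DLQ P (j + 1) ψ)‖ else 0)) + ‖(1 - DLP' P k) v‖ :=
            add_le_add hIH (DL_contract _ (DL_sub_sa _ (hPsa i))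
              (DL_sub_idem _ (hPidem i)) _)
        _ = ‖(1 - DLP' P k) v‖ + _ := add_comm _ _

end Aux

/-- In the detectability-lemma setting, for any vector `ψ` the energy bound
`⟨ψ| P† H P |ψ⟩ ≤ g² (‖ψ‖² - ‖Pψ‖²)` holds, where `P = P_1 ⋯ P_N`,
`H = ∑ i, H_i` with `H_i = 1 - P_i` projectors, and `g` is the maximum
interaction degree. -/
theorem detectability_energy_bound
    {E : Type*} [NormedAddCommGroup E] [InnerProductSpace ℂ E] [FiniteDimensional ℂ E]
    {N : ℕ} (P : Fin N → (E →L[ℂ] E))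
    (hPsa : ∀ i, IsSelfAdjoint (P i)) (hPidem : ∀ i, P i * P i = P i)
    (H : E →L[ℂ] E) (hH : H = ∑ i, (1 - P i))
    (g : ℕ)
    (hg : (g : ℕ) = Finset.univ.sup fun i =>
      (Finset.univ.filter fun j => ¬ Commute ((1 : E →L[ℂ] E) - P i) (1 - P j)).card)
    (ψ : E) :
    (⟪(List.ofFn P).prod ψ, H ((List.ofFn P).prod ψ)⟫_ℂ).re ≤
      (g : ℝ) ^ 2 * (‖ψ‖ ^ 2 - ‖(List.ofFn P).prod ψ‖ ^ 2) := by
  have hprod : (List.ofFn P).prod = DLQ P 0 := rfl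
  rw [hprod]
  set a : ℕ → ℝ := fun j => ‖((1 : E →L[ℂ] E) - DLP' P j) (DLQ P (j + 1) ψ)‖ with ha
  -- telescoping identity
  have htel : ‖ψ‖ ^ 2 - ‖DLQ P 0 ψ‖ ^ 2 = ∑ j ∈ Finset.range N, (a j) ^ 2 := by
    have hstep : ∀ j ∈ Finset.range N,
        (a j) ^ 2 = ‖DLQ P (j + 1) ψ‖ ^ 2 - ‖DLQ P j ψ‖ ^ 2 := by
      intro j hj
      rw [Finset.mem_range] at hj
      have hp := DL_pythag (DLP' P j) (DLP'_sa P hPsa j) (DLP'_idem P hPidem j)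
        (DLQ P (j + 1) ψ)
      have hq : DLQ P j ψ = DLP' P j (DLQ P (j + 1) ψ) := by rw [DLQ_succ P hj]; rfl
      rw [ha]
      simp only []
      rw [hq]
      linarith [hp]
    rw [Finset.sum_congr rfl hstep, Finset.sum_range_sub (fun j => ‖DLQ P j ψ‖ ^ 2) N,
      DLQ_top P (le_refl N)]
    simp
  -- LHS as a sum of squares
  have hLHS : (⟪DLQ P 0 ψ, H (DLQ P 0 ψ)⟫_ℂ).re
      = ∑ i : Fin N, ‖(1 - P i) (DLQ P 0 ψ)‖ ^ 2 := by
    rw [hH, ContinuousLinearMap.sum_apply, inner_sum, Complex.re_sum]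
    exact Finset.sum_congr rfl fun i _ =>
      DL_inner_self _ (DL_sub_sa _ (hPsa i)) (DL_sub_idem _ (hPidem i)) _
  -- cardinality bound 1
  have hcard1 : ∀ i : Fin N,
      ((((Finset.Ico 0 (i : ℕ)).filter
        fun j => ¬ Commute ((1 : E →L[ℂ] E) - P i) (1 - DLP' P j)).card : ℕ) : ℝ) ≤ g := by
    intro i
    have h1 : ((Finset.Ico 0 (i : ℕ)).filter
          fun j => ¬ Commute ((1 : E →L[ℂ] E) - P i) (1 - DLP' P j)).card
        ≤ (Finset.univ.filter
          fun j : Fin N => ¬ Commute ((1 : E →L[ℂ] E) - P i) (1 - P j)).card := by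
      apply Finset.card_le_card_of_injOn (fun j => (⟨j % N, Nat.mod_lt _ i.pos⟩ : Fin N))
      · intro j hj
        simp only [Finset.mem_coe, Finset.mem_filter, Finset.mem_Ico] at hj ⊢
        obtain ⟨⟨-, hji⟩, hcomm⟩ := hj
        have hjN : j < N := lt_trans hji i.isLt
        refine ⟨Finset.mem_univ _, ?_⟩
        have he : (⟨j % N, Nat.mod_lt _ i.pos⟩ : Fin N) = ⟨j, hjN⟩ := by
          ext; exact Nat.mod_eq_of_lt hjN
        rw [he]
        have hdl : DLP' P j = P ⟨j, hjN⟩ := by unfold DLP'; rw [dif_pos hjN]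
        rwa [hdl] at hcomm
      · intro x hx y hy hxy
        simp only [Finset.coe_filter, Set.mem_setOf_eq, Finset.mem_Ico] at hx hy
        have hxN : x < N := lt_trans hx.1.2 i.isLt
        have hyN : y < N := lt_trans hy.1.2 i.isLt
        have := congrArg Fin.val hxy
        simpa [Nat.mod_eq_of_lt hxN, Nat.mod_eq_of_lt hyN] using this
    have h2 : (Finset.univ.filter
          fun j : Fin N => ¬ Commute ((1 : E →L[ℂ] E) - P i) (1 - P j)).card ≤ g := by
      rw [hg]
      exact Finset.le_sup (f := fun i : Fin N => (Finset.univ.filter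
        fun j : Fin N => ¬ Commute ((1 : E →L[ℂ] E) - P i) (1 - P j)).card)
        (Finset.mem_univ i)
    exact_mod_cast le_trans h1 h2
  -- cardinality bound 2
  have hcard2 : ∀ j : ℕ, j < N →
      (((Finset.univ.filter
        fun i : Fin N => ¬ Commute ((1 : E →L[ℂ] E) - P i) (1 - DLP' P j)).card : ℕ) : ℝ) ≤ g := by
    intro j hj
    have hdl : DLP' P j = P ⟨j, hj⟩ := by unfold DLP'; rw [dif_pos hj]
    have heq : (Finset.univ.filter
          fun i : Fin N => ¬ Commute ((1 : E →L[ℂ] E) - P i) (1 - DLP' P j))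
        = Finset.univ.filter
          fun i : Fin N => ¬ Commute ((1 : E →L[ℂ] E) - P ⟨j, hj⟩) (1 - P i) := by
      apply Finset.filter_congr
      intro x _
      rw [hdl]
      exact ⟨fun h hc => h hc.symm, fun h hc => h hc.symm⟩
    rw [heq]
    have h3 : (Finset.univ.filter
          fun i : Fin N => ¬ Commute ((1 : E →L[ℂ] E) - P ⟨j, hj⟩) (1 - P i)).card ≤ g := by
      rw [hg]
      exact Finset.le_sup (f := fun i : Fin N => (Finset.univ.filter
        fun j : Fin N => ¬ Commute ((1 : E →L[ℂ] E) - P i) (1 - P j)).card)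
        (Finset.mem_univ (⟨j, hj⟩ : Fin N))
    exact_mod_cast h3
  -- per-i bound
  have hper : ∀ i : Fin N, ‖(1 - P i) (DLQ P 0 ψ)‖ ^ 2 ≤
      (g : ℝ) * ∑ j ∈ Finset.range N,
        (if (j < (i : ℕ) ∧ ¬ Commute ((1 : E →L[ℂ] E) - P i) (1 - DLP' P j))
          then (a j) ^ 2 else 0) := by
    intro i
    have hkey := DL_key P hPsa hPidem ψ i (i : ℕ) 0 (by omega)
    set S := (Finset.Ico 0 (i : ℕ)).filter
      (fun j => ¬ Commute ((1 : E →L[ℂ] E) - P i) (1 - DLP' P j)) with hS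
    have hkey' : ‖(1 - P i) (DLQ P 0 ψ)‖ ≤ ∑ j ∈ S, a j := by
      rw [hS, Finset.sum_filter]
      simp only [ha]
      exact hkey
    have hsq : ‖(1 - P i) (DLQ P 0 ψ)‖ ^ 2 ≤ (∑ j ∈ S, a j) ^ 2 :=
      pow_le_pow_left₀ (norm_nonneg _) hkey' 2
    have hcs : (∑ j ∈ S, a j) ^ 2 ≤ (S.card : ℝ) * ∑ j ∈ S, (a j) ^ 2 :=
      sq_sum_le_card_mul_sum_sq
    have hsum_nonneg : (0 : ℝ) ≤ ∑ j ∈ S, (a j) ^ 2 :=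
      Finset.sum_nonneg fun _ _ => sq_nonneg _
    have hfin : ∑ j ∈ S, (a j) ^ 2 = ∑ j ∈ Finset.range N,
        (if (j < (i : ℕ) ∧ ¬ Commute ((1 : E →L[ℂ] E) - P i) (1 - DLP' P j))
          then (a j) ^ 2 else 0) := by
      rw [hS, Finset.sum_filter]
      have hico : Finset.Ico 0 (i : ℕ) = (Finset.range N).filter (fun j => j < (i : ℕ)) := by
        ext j
        simp only [Finset.mem_Ico, Finset.mem_filter, Finset.mem_range]
        exact ⟨fun h => ⟨lt_trans h.2 i.isLt, h.2⟩, fun h => ⟨Nat.zero_le _, h.2⟩⟩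
      rw [hico, Finset.sum_filter]
      apply Finset.sum_congr rfl
      intro j _
      by_cases h1 : j < (i : ℕ) <;>
        by_cases h2 : Commute ((1 : E →L[ℂ] E) - P i) (1 - DLP' P j) <;>
        simp [h1, h2]
    calc ‖(1 - P i) (DLQ P 0 ψ)‖ ^ 2
        ≤ (S.card : ℝ) * ∑ j ∈ S, (a j) ^ 2 := le_trans hsq hcs
      _ ≤ (g : ℝ) * ∑ j ∈ S, (a j) ^ 2 :=
          mul_le_mul_of_nonneg_right (hcard1 i) hsum_nonneg
      _ = _ := by rw [hfin]
  -- main estimate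
  have hmain : ∑ i : Fin N, ‖(1 - P i) (DLQ P 0 ψ)‖ ^ 2
      ≤ (g : ℝ) ^ 2 * ∑ j ∈ Finset.range N, (a j) ^ 2 := by
    calc ∑ i : Fin N, ‖(1 - P i) (DLQ P 0 ψ)‖ ^ 2
        ≤ ∑ i : Fin N, (g : ℝ) * ∑ j ∈ Finset.range N,
            (if (j < (i : ℕ) ∧ ¬ Commute ((1 : E →L[ℂ] E) - P i) (1 - DLP' P j))
              then (a j) ^ 2 else 0) :=
          Finset.sum_le_sum fun i _ => hper i
      _ = (g : ℝ) * ∑ j ∈ Finset.range N, ∑ i : Fin N,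
            (if (j < (i : ℕ) ∧ ¬ Commute ((1 : E →L[ℂ] E) - P i) (1 - DLP' P j))
              then (a j) ^ 2 else 0) := by
          rw [← Finset.mul_sum, Finset.sum_comm]
      _ ≤ (g : ℝ) * ∑ j ∈ Finset.range N, ((g : ℝ) * (a j) ^ 2) := by
          apply mul_le_mul_of_nonneg_left _ (Nat.cast_nonneg g)
          apply Finset.sum_le_sum
          intro j hj
          rw [Finset.mem_range] at hj
          calc ∑ i : Fin N,
              (if (j < (i : ℕ) ∧ ¬ Commute ((1 : E →L[ℂ] E) - P i) (1 - DLP' P j))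
                then (a j) ^ 2 else 0)
              ≤ ∑ i : Fin N,
                (if ¬ Commute ((1 : E →L[ℂ] E) - P i) (1 - DLP' P j)
                  then (a j) ^ 2 else 0) := by
                apply Finset.sum_le_sum
                intro i _
                by_cases h2 : Commute ((1 : E →L[ℂ] E) - P i) (1 - DLP' P j)
                · simp [h2]
                · rw [if_pos h2]
                  split_ifs with h1
                  · exact le_refl _
                  · exact sq_nonneg _
            _ = (((Finset.univ.filter fun i : Fin N =>
                  ¬ Commute ((1 : E →L[ℂ] E) - P i) (1 - DLP' P j)).card : ℕ) : ℝ)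
                  * (a j) ^ 2 := by
                rw [← Finset.sum_filter, Finset.sum_const, nsmul_eq_mul]
            _ ≤ (g : ℝ) * (a j) ^ 2 :=
                mul_le_mul_of_nonneg_right (hcard2 j hj) (sq_nonneg _)
      _ = (g : ℝ) ^ 2 * ∑ j ∈ Finset.range N, (a j) ^ 2 := by
          rw [← Finset.mul_sum]; ring
  rw [hLHS, htel]
  exact hmain
end
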